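/- If X and Y are nonzero real Banach spaces, then t(X ⊕_1 Y) ≥ max{t(X), t(Y)}. -/

import Mathlib

set_option linter.unusedSectionVars false

noncomputable def thinness (X : Type*) [NormedAddCommGroup X] : ℝ :=
  sInf {r : ℝ | 0 < r ∧ ∀ (n : ℕ) (x : Fin n → X), (∀ i, ‖x i‖ = 1) →
    ∀ ε : ℝ, 0 < ε → ∃ y : X, ‖y‖ = 1 ∧ ∀ i, ‖x i - y‖ < r + ε}

section aux
variable {X Y : Type*} [NormedAddCommGroup X] [NormedSpace ℝ X] [Nontrivial X]
  [NormedAddCommGroup Y] [NormedSpace ℝ Y] [Nontrivial Y]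

lemma norm_withLp1 (z : WithLp 1 (X × Y)) : ‖z‖ = ‖z.fst‖ + ‖z.snd‖ := by
  rw [WithLp.prod_norm_eq_add (by norm_num)]
  norm_num

lemma two_mem_prod : (2 : ℝ) ∈ {r : ℝ | 0 < r ∧ ∀ (n : ℕ) (x : Fin n → WithLp 1 (X × Y)),
    (∀ i, ‖x i‖ = 1) → ∀ ε : ℝ, 0 < ε → ∃ y, ‖y‖ = 1 ∧ ∀ i, ‖x i - y‖ < r + ε} := by
  refine ⟨by norm_num, fun n x hx ε hε => ?_⟩
  obtain ⟨u, hu⟩ := exists_norm_eq X (zero_le_one)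
  refine ⟨(WithLp.equiv 1 (X × Y)).symm (u, 0), ?_, fun i => ?_⟩
  · rw [norm_withLp1]; simp [hu]
  · calc ‖x i - _‖ ≤ ‖x i‖ + ‖(WithLp.equiv 1 (X × Y)).symm (u, 0)‖ := norm_sub_le _ _
      _ < 2 + ε := by rw [hx i, norm_withLp1]; simp [hu]; linarith

lemma mem_fst {r : ℝ} (hr : r ∈ {r : ℝ | 0 < r ∧ ∀ (n : ℕ) (x : Fin n → WithLp 1 (X × Y)),
    (∀ i, ‖x i‖ = 1) → ∀ ε : ℝ, 0 < ε → ∃ y, ‖y‖ = 1 ∧ ∀ i, ‖x i - y‖ < r + ε}) :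
    r ∈ {r : ℝ | 0 < r ∧ ∀ (n : ℕ) (x : Fin n → X), (∀ i, ‖x i‖ = 1) →
      ∀ ε : ℝ, 0 < ε → ∃ y : X, ‖y‖ = 1 ∧ ∀ i, ‖x i - y‖ < r + ε} := by
  obtain ⟨hr0, hr⟩ := hr
  refine ⟨hr0, fun n x hx ε hε => ?_⟩
  set z : Fin n → WithLp 1 (X × Y) := fun i => (WithLp.equiv 1 (X × Y)).symm (x i, 0) with hz
  have hzn : ∀ i, ‖z i‖ = 1 := fun i => by rw [norm_withLp1]; simp [hz, hx i]
  obtain ⟨w, hw, hwi⟩ := hr n z hzn ε hε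
  have hdist : ∀ i, ‖x i - w.fst‖ + ‖w.snd‖ < r + ε := by
    intro i
    have := hwi i
    rw [norm_withLp1] at this
    have e1 : (z i - w).fst = x i - w.fst := rfl
    have e2 : (z i - w).snd = 0 - w.snd := rfl
    rw [e1, e2, zero_sub, norm_neg] at this
    exact this
  rw [norm_withLp1] at hw
  by_cases hw1 : w.fst = 0
  · obtain ⟨u, hu⟩ := exists_norm_eq X (zero_le_one)
    refine ⟨u, hu, fun i => ?_⟩
    have := hdist i
    calc ‖x i - u‖ ≤ ‖x i‖ + ‖u‖ := norm_sub_le _ _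
      _ = 1 + ‖w.snd‖ := by rw [hx i, hu]; rw [hw1] at hw; simpa using hw.symm
      _ ≤ ‖x i - w.fst‖ + ‖w.snd‖ := by
          rw [hw1, sub_zero, hx i]
      _ < r + ε := this
  · have hpos : 0 < ‖w.fst‖ := norm_pos_iff.mpr hw1
    refine ⟨‖w.fst‖⁻¹ • w.fst, ?_, fun i => ?_⟩
    · rw [norm_smul, norm_inv, norm_norm, inv_mul_cancel₀ hpos.ne']
    · have hle : ‖w.fst‖ ≤ 1 := by
        have := norm_nonneg w.snd; linarith
      have key : ‖w.fst - ‖w.fst‖⁻¹ • w.fst‖ = 1 - ‖w.fst‖ := by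
        have : w.fst - ‖w.fst‖⁻¹ • w.fst = (1 - ‖w.fst‖⁻¹) • w.fst := by
          rw [sub_smul, one_smul]
        rw [this, norm_smul, Real.norm_eq_abs, abs_sub_comm,
          abs_of_nonneg (by rw [sub_nonneg]; nlinarith [mul_inv_cancel₀ hpos.ne'])]
        field_simp
      have h2 : 1 - ‖w.fst‖ = ‖w.snd‖ := by linarith
      calc ‖x i - ‖w.fst‖⁻¹ • w.fst‖ ≤ ‖x i - w.fst‖ + ‖w.fst - ‖w.fst‖⁻¹ • w.fst‖ :=
            norm_sub_le_norm_sub_add_norm_sub _ _ _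
        _ = ‖x i - w.fst‖ + ‖w.snd‖ := by rw [key, h2]
        _ < r + ε := hdist i

lemma mem_snd {r : ℝ} (hr : r ∈ {r : ℝ | 0 < r ∧ ∀ (n : ℕ) (x : Fin n → WithLp 1 (X × Y)),
    (∀ i, ‖x i‖ = 1) → ∀ ε : ℝ, 0 < ε → ∃ y, ‖y‖ = 1 ∧ ∀ i, ‖x i - y‖ < r + ε}) :
    r ∈ {r : ℝ | 0 < r ∧ ∀ (n : ℕ) (x : Fin n → Y), (∀ i, ‖x i‖ = 1) →
      ∀ ε : ℝ, 0 < ε → ∃ y : Y, ‖y‖ = 1 ∧ ∀ i, ‖x i - y‖ < r + ε} := by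
  obtain ⟨hr0, hr⟩ := hr
  refine ⟨hr0, fun n x hx ε hε => ?_⟩
  set z : Fin n → WithLp 1 (X × Y) := fun i => (WithLp.equiv 1 (X × Y)).symm (0, x i) with hz
  have hzn : ∀ i, ‖z i‖ = 1 := fun i => by rw [norm_withLp1]; simp [hz, hx i]
  obtain ⟨w, hw, hwi⟩ := hr n z hzn ε hε
  have hdist : ∀ i, ‖w.fst‖ + ‖x i - w.snd‖ < r + ε := by
    intro i
    have := hwi i
    rw [norm_withLp1] at this
    have e1 : (z i - w).fst = 0 - w.fst := rfl
    have e2 : (z i - w).snd = x i - w.snd := rfl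
    rw [e1, e2, zero_sub, norm_neg] at this
    exact this
  rw [norm_withLp1] at hw
  by_cases hw2 : w.snd = 0
  · obtain ⟨u, hu⟩ := exists_norm_eq Y (zero_le_one)
    refine ⟨u, hu, fun i => ?_⟩
    have := hdist i
    calc ‖x i - u‖ ≤ ‖x i‖ + ‖u‖ := norm_sub_le _ _
      _ = 1 + ‖w.fst‖ := by rw [hx i, hu]; rw [hw2] at hw; simpa using hw.symm
      _ ≤ ‖w.fst‖ + ‖x i - w.snd‖ := by rw [hw2, sub_zero, hx i]; linarith
      _ < r + ε := this
  · have hpos : 0 < ‖w.snd‖ := norm_pos_iff.mpr hw2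
    refine ⟨‖w.snd‖⁻¹ • w.snd, ?_, fun i => ?_⟩
    · rw [norm_smul, norm_inv, norm_norm, inv_mul_cancel₀ hpos.ne']
    · have hle : ‖w.snd‖ ≤ 1 := by
        have := norm_nonneg w.fst; linarith
      have key : ‖w.snd - ‖w.snd‖⁻¹ • w.snd‖ = 1 - ‖w.snd‖ := by
        have : w.snd - ‖w.snd‖⁻¹ • w.snd = (1 - ‖w.snd‖⁻¹) • w.snd := by
          rw [sub_smul, one_smul]
        rw [this, norm_smul, Real.norm_eq_abs, abs_sub_comm,
          abs_of_nonneg (by rw [sub_nonneg]; nlinarith [mul_inv_cancel₀ hpos.ne'])]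
        field_simp
      have h2 : 1 - ‖w.snd‖ = ‖w.fst‖ := by linarith
      calc ‖x i - ‖w.snd‖⁻¹ • w.snd‖ ≤ ‖x i - w.snd‖ + ‖w.snd - ‖w.snd‖⁻¹ • w.snd‖ :=
            norm_sub_le_norm_sub_add_norm_sub _ _ _
        _ = ‖x i - w.snd‖ + ‖w.fst‖ := by rw [key, h2]
        _ < r + ε := by have := hdist i; linarith

end aux

theorem thinness_prodL1_ge_max
    (X Y : Type*) [NormedAddCommGroup X] [NormedSpace ℝ X] [CompleteSpace X] [Nontrivial X]
    [NormedAddCommGroup Y] [NormedSpace ℝ Y] [CompleteSpace Y] [Nontrivial Y] :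
    max (thinness X) (thinness Y) ≤ thinness (WithLp 1 (X × Y)) := by
  have hbddX : BddBelow {r : ℝ | 0 < r ∧
      ∀ (n : ℕ) (x : Fin n → X), (∀ i, ‖x i‖ = 1) →
      ∀ ε : ℝ, 0 < ε → ∃ y : X, ‖y‖ = 1 ∧ ∀ i, ‖x i - y‖ < r + ε} :=
    ⟨0, fun r hr => hr.1.le⟩
  have hbddY : BddBelow {r : ℝ | 0 < r ∧
      ∀ (n : ℕ) (x : Fin n → Y), (∀ i, ‖x i‖ = 1) →
      ∀ ε : ℝ, 0 < ε → ∃ y : Y, ‖y‖ = 1 ∧ ∀ i, ‖x i - y‖ < r + ε} :=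
    ⟨0, fun r hr => hr.1.le⟩
  have hne : Set.Nonempty {r : ℝ | 0 < r ∧ ∀ (n : ℕ) (x : Fin n → WithLp 1 (X × Y)),
      (∀ i, ‖x i‖ = 1) → ∀ ε : ℝ, 0 < ε → ∃ y, ‖y‖ = 1 ∧ ∀ i, ‖x i - y‖ < r + ε} :=
    ⟨2, two_mem_prod⟩
  refine max_le ?_ ?_
  · exact csInf_le_csInf hbddX hne (fun r hr => mem_fst hr)
  · exact csInf_le_csInf hbddY hne (fun r hr => mem_snd hr)
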